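/- Let Y be a real random variable with continuous, strictly increasing CDF F, and let F̂ : ℝ → [0,1] be any nondecreasing function with sup_y |F̂(y) - F(y)| ≤ ε. Then U = F̂(Y) satisfies sup_{u ∈ [0,1]} |P(U ≤ u) - u| ≤ 2ε. -/

import Mathlib

open MeasureTheory Filter

/-- If `Y` has continuous strictly increasing CDF `F` and `F̂ : ℝ → [0,1]` is
nondecreasing with `sup_y |F̂ y - F y| ≤ ε`, then the estimated PIT value `U = F̂(Y)`
has Kolmogorov distance to uniform at most `2ε`. -/
theorem pit_kolmogorov_distance_le_of_cdf_error
    {Ω : Type*} [MeasurableSpace Ω] (μ : Measure Ω) [IsProbabilityMeasure μ]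
    (Y : Ω → ℝ) (hY : Measurable Y) (F : ℝ → ℝ)
    (hFdef : ∀ y, F y = (μ {ω | Y ω ≤ y}).toReal)
    (hFc : Continuous F) (hFm : StrictMono F)
    (Fhat : ℝ → ℝ) (hmono : Monotone Fhat) (hrange : ∀ y, Fhat y ∈ Set.Icc (0 : ℝ) 1)
    (ε : ℝ) (happrox : ∀ y, |Fhat y - F y| ≤ ε) :
    ∀ u ∈ Set.Icc (0 : ℝ) 1, |(μ {ω | Fhat (Y ω) ≤ u}).toReal - u| ≤ 2 * ε := by
  have hε : 0 ≤ ε := (abs_nonneg _).trans (happrox 0)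
  -- F is the cdf of the pushforward measure
  have hν : IsProbabilityMeasure (μ.map Y) := Measure.isProbabilityMeasure_map hY.aemeasurable
  have hFeq : F = ProbabilityTheory.cdf (μ.map Y) := by
    funext y
    rw [hFdef, ProbabilityTheory.cdf_eq_real, measureReal_def, Measure.map_apply hY measurableSet_Iic]
    rfl
  have hbot : Tendsto F atBot (nhds 0) := by
    rw [hFeq]; exact ProbabilityTheory.tendsto_cdf_atBot _
  have htop : Tendsto F atTop (nhds 1) := by
    rw [hFeq]; exact ProbabilityTheory.tendsto_cdf_atTop _
  have hF0 : ∀ y, 0 < F y := by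
    intro y
    have h1 : (0:ℝ) ≤ F (y - 1) := by rw [hFdef]; exact ENNReal.toReal_nonneg
    have := hFm (show y - 1 < y by linarith)
    linarith
  -- exact PIT for t ∈ (0,1)
  have key : ∀ t : ℝ, 0 < t → t < 1 → (μ {ω | F (Y ω) ≤ t}).toReal = t := by
    intro t ht0 ht1
    obtain ⟨a, ha⟩ : ∃ a, F a < t := (hbot.eventually_lt_const ht0).exists
    obtain ⟨b, hb⟩ : ∃ b, t < F b := (htop.eventually_const_lt ht1).exists
    have hab : a ≤ b := (hFm.lt_iff_lt.mp (ha.trans hb)).le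
    obtain ⟨y, -, hy⟩ := intermediate_value_Icc hab hFc.continuousOn ⟨ha.le, hb.le⟩
    have hset : {ω | F (Y ω) ≤ t} = {ω | Y ω ≤ y} := by
      ext ω
      simp only [Set.mem_setOf_eq, ← hy, hFm.le_iff_le]
    rw [hset, ← hFdef, hy]
  intro u hu
  obtain ⟨hu0, hu1⟩ := hu
  have hAle1 : (μ {ω | Fhat (Y ω) ≤ u}).toReal ≤ 1 := by
    have := ENNReal.toReal_mono (ENNReal.one_ne_top) (prob_le_one (μ := μ)
      (s := {ω | Fhat (Y ω) ≤ u}))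
    simpa using this
  rw [abs_le]
  constructor
  · -- lower bound: u - 2ε ≤ μ A
    rw [neg_le, neg_sub]
    have hsub : {ω | F (Y ω) ≤ u - ε} ⊆ {ω | Fhat (Y ω) ≤ u} := by
      intro ω h
      have h2 := abs_le.mp (happrox (Y ω))
      simp only [Set.mem_setOf_eq] at h ⊢
      linarith [h2.1]
    have hm := ENNReal.toReal_mono (measure_ne_top μ _) (measure_mono hsub)
    by_cases h0 : u - ε ≤ 0
    · have : (0:ℝ) ≤ (μ {ω | Fhat (Y ω) ≤ u}).toReal := ENNReal.toReal_nonneg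
      linarith
    · by_cases h1 : u - ε < 1
      · have := key (u - ε) (by linarith) h1
        linarith
      · -- u - ε ≥ 1, so u = 1 and ε = 0
        have hε0 : ε = 0 := by linarith
        have hu' : u = 1 := by linarith
        have hA : {ω | Fhat (Y ω) ≤ u} = Set.univ := by
          ext ω
          simp only [Set.mem_setOf_eq, Set.mem_univ, iff_true, hu']
          exact (hrange (Y ω)).2
        rw [hA]
        simp [hu', hε0]
  · -- upper bound: μ A ≤ u + 2ε
    have hsub : {ω | Fhat (Y ω) ≤ u} ⊆ {ω | F (Y ω) ≤ u + ε} := by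
      intro ω h
      have h2 := abs_le.mp (happrox (Y ω))
      simp only [Set.mem_setOf_eq] at h ⊢
      linarith [h2.2]
    have hm := ENNReal.toReal_mono (measure_ne_top μ _) (measure_mono hsub)
    by_cases h1 : 1 ≤ u + ε
    · linarith
    · by_cases h0 : u + ε ≤ 0
      · have hE : {ω | F (Y ω) ≤ u + ε} = ∅ := by
          ext ω
          simp only [Set.mem_setOf_eq, Set.mem_empty_iff_false, iff_false, not_le]
          linarith [hF0 (Y ω)]
        rw [hE] at hm
        simp only [measure_empty, ENNReal.toReal_zero] at hm
        linarith
      · have := key (u + ε) (by linarith) (by linarith)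
        linarith
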